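/- Two Archimedean generators ψ and ψ̃ generate the same Archimedean copula (in dimension d ≥ 2) if and only if there exists c > 0 such that ψ̃(cx) = ψ(x) for all x ≥ 0. -/

import Mathlib

open Filter Set

/-- An Archimedean generator: continuous on `[0,∞)`, `ψ 0 = 1`,
`ψ x → 0` as `x → ∞`, strictly decreasing where positive, with values in `[0,1]`. -/
def IsArchGenerator (ψ : ℝ → ℝ) : Prop :=
  ContinuousOn ψ (Set.Ici 0) ∧ ψ 0 = 1 ∧
    Filter.Tendsto ψ Filter.atTop (nhds 0) ∧
    StrictAntiOn ψ {x | 0 ≤ x ∧ 0 < ψ x} ∧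
    ∀ x, 0 ≤ x → ψ x ∈ Set.Icc (0:ℝ) 1

/-- Pseudo-inverse of an Archimedean generator: `ψ⁻¹ u = inf {x > 0 | ψ x = u}`. -/
noncomputable def archPseudoInv (ψ : ℝ → ℝ) (u : ℝ) : ℝ :=
  sInf {x | 0 < x ∧ ψ x = u}

namespace ArchAux

variable {ψ : ℝ → ℝ}

/-- injectivity on the positivity set -/
lemma gen_inj (hψ : IsArchGenerator ψ) {y z : ℝ} (hy : 0 ≤ y) (hz : 0 ≤ z)
    (hyp : 0 < ψ y) (hzp : 0 < ψ z) (h : ψ y = ψ z) : y = z := by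
  obtain ⟨-, -, -, hsa, -⟩ := hψ
  rcases lt_trichotomy y z with hlt | heq | hgt
  · exact absurd (hsa ⟨hy, hyp⟩ ⟨hz, hzp⟩ hlt) (by rw [h]; exact lt_irrefl _)
  · exact heq
  · exact absurd (hsa ⟨hz, hzp⟩ ⟨hy, hyp⟩ hgt) (by rw [h]; exact lt_irrefl _)

/-- once zero, always zero -/
lemma zero_persists (hψ : IsArchGenerator ψ) {a b : ℝ} (ha : 0 ≤ a) (hab : a ≤ b)
    (h0 : ψ a = 0) : ψ b = 0 := by
  obtain ⟨hc, h1, -, hsa, hmem⟩ := hψ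
  by_contra hb
  have hbpos : 0 < ψ b := lt_of_le_of_ne (hmem b (ha.trans hab)).1 (Ne.symm hb)
  have hab' : a < b := lt_of_le_of_ne hab (by rintro rfl; exact hb h0)
  -- find x ∈ [0,a] with ψ x = ψ b / 2 by IVT (ψ a = 0 ≤ ψb/2 ≤ 1 = ψ 0)
  have hIV : Set.Icc (ψ a) (ψ 0) ⊆ ψ '' Set.Icc 0 a :=
    intermediate_value_Icc' ha (hc.mono (Set.Icc_subset_Ici_self))
  have hmemIcc : ψ b / 2 ∈ Set.Icc (ψ a) (ψ 0) := by
    constructor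
    · rw [h0]; linarith
    · rw [h1]; have := (hmem b (ha.trans hab)).2; linarith
  obtain ⟨x, hx, hxval⟩ := hIV hmemIcc
  have hxb : x < b := lt_of_le_of_lt hx.2 hab'
  have := hsa ⟨hx.1, by rw [hxval]; linarith⟩ ⟨ha.trans hab, hbpos⟩ hxb
  rw [hxval] at this
  linarith

/-- existence of a preimage for u ∈ (0,1] -/
lemma exists_preimage (hψ : IsArchGenerator ψ) {u : ℝ} (hu0 : 0 < u) (hu1 : u ≤ 1) :
    ∃ x, 0 ≤ x ∧ ψ x = u := by
  obtain ⟨hc, h1, hlim, -, -⟩ := hψ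
  obtain ⟨N, hN⟩ := (hlim.eventually (gt_mem_nhds hu0)).exists_forall_of_atTop
  have hN' : ψ (max N 0) < u := hN _ (le_max_left _ _)
  have hIV : Set.Icc (ψ (max N 0)) (ψ 0) ⊆ ψ '' Set.Icc 0 (max N 0) :=
    intermediate_value_Icc' (le_max_right _ _) (hc.mono (Set.Icc_subset_Ici_self))
  obtain ⟨x, hx, hxval⟩ := hIV ⟨hN'.le, by rw [h1]; exact hu1⟩
  exact ⟨x, hx.1, hxval⟩

/-- the pseudo-inverse inverts: for u ∈ (0,1], ψ (ψ⁻¹ u) = u and ψ⁻¹ u ≥ 0 -/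
lemma pseudoInv_spec (hψ : IsArchGenerator ψ) {u : ℝ} (hu0 : 0 < u) (hu1 : u ≤ 1) :
    0 ≤ archPseudoInv ψ u ∧ ψ (archPseudoInv ψ u) = u := by
  obtain ⟨x, hx0, hxval⟩ := exists_preimage hψ hu0 hu1
  rcases eq_or_lt_of_le hx0 with heq | hxpos
  · -- ψ x = u with x = 0, so u = 1 and the set {y > 0 | ψ y = u} is empty
    have h1 : ψ 0 = 1 := hψ.2.1
    have hset : {y | 0 < y ∧ ψ y = u} = ∅ := by
      ext y; simp only [Set.mem_setOf_eq, Set.mem_empty_iff_false, iff_false, not_and]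
      intro hy hval
      have := gen_inj hψ hy.le hx0 (by rw [hval]; exact hu0) (by rw [hxval]; exact hu0)
        (hval.trans hxval.symm)
      rw [← heq] at this; exact absurd this hy.ne'
    rw [archPseudoInv, hset, Real.sInf_empty]
    rw [← heq] at hxval
    exact ⟨le_refl 0, hxval⟩
  · have hset : {y | 0 < y ∧ ψ y = u} = {x} := by
      ext y; simp only [Set.mem_setOf_eq, Set.mem_singleton_iff]
      constructor
      · rintro ⟨hy, hval⟩
        exact gen_inj hψ hy.le hx0 (by rw [hval]; exact hu0) (by rw [hxval]; exact hu0)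
          (hval.trans hxval.symm)
      · rintro rfl; exact ⟨hxpos, hxval⟩
    rw [archPseudoInv, hset, csInf_singleton]
    exact ⟨hx0, hxval⟩

/-- ψ⁻¹ (ψ x) = x for 0 ≤ x with ψ x > 0 -/
lemma pseudoInv_comp (hψ : IsArchGenerator ψ) {x : ℝ} (hx : 0 ≤ x) (hp : 0 < ψ x) :
    archPseudoInv ψ (ψ x) = x := by
  have hu1 : ψ x ≤ 1 := (hψ.2.2.2.2 x hx).2
  obtain ⟨h0, hval⟩ := pseudoInv_spec hψ hp hu1
  exact gen_inj hψ h0 hx (by rw [hval]; exact hp) hp hval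

lemma pseudoInv_one (hψ : IsArchGenerator ψ) : archPseudoInv ψ 1 = 0 := by
  have := pseudoInv_comp hψ (le_refl (0:ℝ)) (by rw [hψ.2.1]; norm_num)
  rwa [hψ.2.1] at this

lemma pseudoInv_nonneg (ψ : ℝ → ℝ) (u : ℝ) : 0 ≤ archPseudoInv ψ u :=
  Real.sInf_nonneg (fun x hx => hx.1.le)

end ArchAux

namespace ArchAux2
open ArchAux Pointwise

/-- scaling of pseudo-inverse -/
lemma pseudoInv_scale {ψ ψt : ℝ → ℝ} {c : ℝ} (hc : 0 < c)
    (h : ∀ x ≥ (0:ℝ), ψt (c * x) = ψ x) (u : ℝ) :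
    archPseudoInv ψt u = c * archPseudoInv ψ u := by
  have hset : {x | 0 < x ∧ ψt x = u} = c • {x | 0 < x ∧ ψ x = u} := by
    ext y
    simp only [Set.mem_setOf_eq, Set.mem_smul_set, smul_eq_mul]
    constructor
    · rintro ⟨hy, hval⟩
      refine ⟨y / c, ⟨div_pos hy hc, ?_⟩, by field_simp⟩
      rw [← h (y / c) (by positivity)]
      rw [show c * (y / c) = y by field_simp, hval]
    · rintro ⟨z, ⟨hz, hval⟩, rfl⟩
      exact ⟨mul_pos hc hz, by rw [h z hz.le, hval]⟩
  rw [archPseudoInv, archPseudoInv, hset, Real.sInf_smul_of_nonneg hc.le, smul_eq_mul]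

end ArchAux2

namespace ArchAux3
open ArchAux

lemma forward {ψ ψt : ℝ → ℝ} (hψ : IsArchGenerator ψ) (hψt : IsArchGenerator ψt)
    (H2 : ∀ a b : ℝ, a ∈ Set.Icc (0:ℝ) 1 → b ∈ Set.Icc (0:ℝ) 1 →
      ψ (archPseudoInv ψ a + archPseudoInv ψ b)
        = ψt (archPseudoInv ψt a + archPseudoInv ψt b)) :
    ∃ c > (0:ℝ), ∀ x ≥ (0:ℝ), ψt (c * x) = ψ x := by
  classical
  set g : ℝ → ℝ := fun x => archPseudoInv ψt (ψ x) with hg_def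
  set P : ℝ → Prop := fun x => 0 ≤ x ∧ 0 < ψ x with hP_def
  have hψ0 : ψ 0 = 1 := hψ.2.1
  have hψt0 : ψt 0 = 1 := hψt.2.1
  have hmem := hψ.2.2.2.2
  have hmemt := hψt.2.2.2.2
  have hsa := hψ.2.2.2.1
  have hsat := hψt.2.2.2.1
  -- basic facts about g
  have hg_val : ∀ x, P x → ψt (g x) = ψ x := by
    intro x hx
    exact (pseudoInv_spec hψt hx.2 (hmem x hx.1).2).2
  have hg_nonneg : ∀ x, 0 ≤ g x := fun x => pseudoInv_nonneg ψt (ψ x)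
  have hP0 : P 0 := ⟨le_refl 0, by rw [hψ0]; norm_num⟩
  have hg0 : g 0 = 0 := by
    simp only [hg_def, hψ0]
    exact pseudoInv_one hψt
  have hPdown : ∀ x y, 0 ≤ x → x ≤ y → P y → P x := by
    intro x y hx hxy hPy
    refine ⟨hx, ?_⟩
    rcases eq_or_lt_of_le (hmem x hx).1 with h | h
    · exact absurd (zero_persists hψ hx hxy h.symm) (ne_of_gt hPy.2)
    · exact h
  -- the two-variable functional identity in terms of g
  have key : ∀ x y, P x → P y → ψ (x + y) = ψt (g x + g y) := by
    intro x y hx hy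
    have := H2 (ψ x) (ψ y) (hmem x hx.1) (hmem y hy.1)
    rwa [pseudoInv_comp hψ hx.1 hx.2, pseudoInv_comp hψ hy.1 hy.2] at this
  -- additivity of g on the positivity region
  have hadd : ∀ x y, P x → P y → P (x + y) → g (x + y) = g x + g y := by
    intro x y hx hy hxy
    have h1 : ψt (g (x + y)) = ψ (x + y) := hg_val _ hxy
    have h2 : ψ (x + y) = ψt (g x + g y) := key x y hx hy
    exact gen_inj hψt (hg_nonneg _) (add_nonneg (hg_nonneg x) (hg_nonneg y))
      (by rw [h1]; exact hxy.2) (by rw [← h2]; exact hxy.2) (h1.trans h2)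
  -- monotonicity of g
  have hmono : ∀ x y, P x → P y → x ≤ y → g x ≤ g y := by
    intro x y hx hy hxy
    rcases eq_or_lt_of_le hxy with rfl | hlt
    · exact le_refl _
    by_contra hgy
    push_neg at hgy
    have h1 : ψt (g x) < ψt (g y) :=
      hsat ⟨hg_nonneg y, by rw [hg_val y hy]; exact hy.2⟩
        ⟨hg_nonneg x, by rw [hg_val x hx]; exact hx.2⟩ hgy
    rw [hg_val x hx, hg_val y hy] at h1
    exact absurd (hsa hx hy hlt) (not_lt.mpr h1.le)
  -- g (n * t) = n * g t
  have hnat : ∀ (n : ℕ) (t : ℝ), 0 ≤ t → P ((n : ℝ) * t) → P t →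
      g ((n : ℝ) * t) = (n : ℝ) * g t := by
    intro n
    induction n with
    | zero => intro t ht _ _; simp [hg0]
    | succ n ih =>
      intro t ht hP hPt
      have hc : ((n+1 : ℕ) : ℝ) = (n:ℝ) + 1 := by push_cast; ring
      rw [hc] at hP ⊢
      have hle : (n : ℝ) * t ≤ ((n:ℝ)+1) * t := by nlinarith
      have hPn : P ((n : ℝ) * t) := hPdown _ _ (mul_nonneg (Nat.cast_nonneg n) ht) hle hP
      have hsum : ((n:ℝ)+1) * t = (n:ℝ)*t + t := by ring
      rw [hsum] at hP ⊢
      rw [hadd _ _ hPn hPt hP, ih t ht hPn hPt]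
      ring
  -- g (q * x) = q * g x for rational q ∈ (0, 1]
  have hrat : ∀ (q : ℚ), 0 < q → q ≤ 1 → ∀ x, P x → g ((q : ℝ) * x) = (q : ℝ) * g x := by
    intro q hq0 hq1 x hx
    have hx0 : 0 ≤ x := hx.1
    set n : ℕ := q.num.toNat with hn_def
    set m : ℕ := q.den with hm_def
    have hm0 : 0 < (m : ℝ) := by
      have := q.den_pos; positivity
    have hnum : (q.num : ℝ) = (n : ℝ) := by
      rw [hn_def]
      norm_cast
      exact (Int.toNat_of_nonneg (Rat.num_pos.mpr hq0).le).symm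
    have hqval : (q : ℝ) = (n : ℝ) / (m : ℝ) := by
      rw [Rat.cast_def, hnum]
    have hq0' : (0:ℝ) < (q:ℝ) := by exact_mod_cast hq0
    have hq1' : (q:ℝ) ≤ 1 := by exact_mod_cast hq1
    have hxm : 0 ≤ x / (m:ℝ) := by positivity
    have hx_eq : (m:ℝ) * (x/(m:ℝ)) = x := by field_simp
    have hPqx : P ((q:ℝ)*x) := by
      refine hPdown _ x (by positivity) ?_ hx
      nlinarith
    have hm1 : (1:ℝ) ≤ (m:ℝ) := by
      have := q.den_pos
      exact_mod_cast this
    have hPxm : P (x/(m:ℝ)) := hPdown _ x hxm (div_le_self hx0 hm1) hx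
    have hqx_eq : (q:ℝ)*x = (n:ℝ) * (x/(m:ℝ)) := by rw [hqval]; ring
    have h1 : g x = (m:ℝ) * g (x/(m:ℝ)) := by
      conv_lhs => rw [← hx_eq]
      exact hnat m (x/(m:ℝ)) hxm (by rw [hx_eq]; exact hx) hPxm
    have h2 : g ((q:ℝ)*x) = (n:ℝ) * g (x/(m:ℝ)) := by
      rw [hqx_eq]
      exact hnat n (x/(m:ℝ)) hxm (by rw [← hqx_eq]; exact hPqx) hPxm
    rw [h2, hqval, h1]
    field_simp
  -- proportionality: g x * y = g y * x
  have hlin : ∀ x y, P x → P y → 0 < x → x ≤ y → g x * y = g y * x := by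
    intro x y hx hy hx0 hxy
    have hy0 : 0 < y := lt_of_lt_of_le hx0 hxy
    have hr0 : 0 < x / y := div_pos hx0 hy0
    have hr1 : x / y ≤ 1 := (div_le_one hy0).mpr hxy
    have hgy0 : 0 ≤ g y := hg_nonneg y
    have hgx0 : 0 ≤ g x := hg_nonneg x
    have hlow : ∀ q : ℚ, 0 < q → (q:ℝ) ≤ x / y → (q:ℝ) * g y ≤ g x := by
      intro q hq0 hqr
      have hq1 : (q:ℝ) ≤ 1 := hqr.trans hr1
      have hq1' : q ≤ 1 := by exact_mod_cast hq1
      have hq0' : (0:ℝ) < (q:ℝ) := by exact_mod_cast hq0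
      have hqy : (q:ℝ) * y ≤ x := by
        have := (le_div_iff₀ hy0).mp hqr
        linarith
      have hPqy : P ((q:ℝ)*y) := hPdown _ x (by positivity) hqy hx
      calc (q:ℝ) * g y = g ((q:ℝ)*y) := (hrat q hq0 hq1' y hy).symm
        _ ≤ g x := hmono _ _ hPqy hx hqy
    have hhigh : ∀ q : ℚ, (x/y) ≤ (q:ℝ) → (q:ℝ) ≤ 1 → g x ≤ (q:ℝ) * g y := by
      intro q hqr hq1
      have hq0 : 0 < q := by
        have : (0:ℝ) < (q:ℝ) := lt_of_lt_of_le hr0 hqr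
        exact_mod_cast this
      have hq1' : q ≤ 1 := by exact_mod_cast hq1
      have hxqy : x ≤ (q:ℝ) * y := by
        have := (div_le_iff₀ hy0).mp hqr
        linarith
      have hqyy : (q:ℝ)*y ≤ y := by nlinarith
      have hPqy : P ((q:ℝ)*y) := hPdown _ y (by positivity) hqyy hy
      calc g x ≤ g ((q:ℝ)*y) := hmono _ _ hx hPqy hxqy
        _ = (q:ℝ)*g y := hrat q hq0 hq1' y hy
    have hconc : g x = (x/y) * g y := by
      rcases eq_or_lt_of_le hxy with rfl | hltxy
      · rw [div_self hy0.ne']; ring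
      have hr1' : x/y < 1 := (div_lt_one hy0).mpr hltxy
      by_contra hne
      rcases lt_or_gt_of_ne hne with hlt2 | hgt2
      · have hgy_pos : 0 < g y := by nlinarith
        obtain ⟨q, hq1, hq2⟩ := exists_rat_btwn
          (show g x / g y < x/y by rw [div_lt_iff₀ hgy_pos]; nlinarith)
        have hq0 : 0 < q := by
          have h0 : (0:ℝ) ≤ g x / g y := by positivity
          have : (0:ℝ) < (q:ℝ) := lt_of_le_of_lt h0 hq1
          exact_mod_cast this
        have hA := hlow q hq0 hq2.le
        rw [div_lt_iff₀ hgy_pos] at hq1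
        linarith
      · rcases eq_or_lt_of_le hgy0 with hgy_eq | hgy_pos
        · have hB := hhigh 1 (by push_cast; linarith) (by norm_num)
          push_cast at hB
          nlinarith
        · obtain ⟨q, hq1, hq2⟩ := exists_rat_btwn
            (show x/y < min 1 (g x / g y) from
              lt_min hr1' (by rw [lt_div_iff₀ hgy_pos]; nlinarith))
          have hq2a : (q:ℝ) < 1 := lt_of_lt_of_le hq2 (min_le_left _ _)
          have hq2b : (q:ℝ) < g x / g y := lt_of_lt_of_le hq2 (min_le_right _ _)
          have hB := hhigh q hq1.le hq2a.le
          rw [lt_div_iff₀ hgy_pos] at hq2b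
          linarith
    rw [hconc]
    field_simp
  -- choose a base point t0
  obtain ⟨t0, ht0_pos, ht0_P⟩ : ∃ t, 0 < t ∧ P t := by
    have hcw : Filter.Tendsto ψ (nhdsWithin 0 (Set.Ici 0)) (nhds 1) := by
      have := hψ.1 0 Set.self_mem_Ici
      rwa [ContinuousWithinAt, hψ0] at this
    have h1 : Filter.Tendsto ψ (nhdsWithin 0 (Set.Ioi 0)) (nhds 1) :=
      hcw.mono_left (nhdsWithin_mono _ Set.Ioi_subset_Ici_self)
    have h2 : ∀ᶠ t in nhdsWithin 0 (Set.Ioi (0:ℝ)), 0 < ψ t :=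
      h1.eventually (lt_mem_nhds (by norm_num : (0:ℝ) < 1))
    have h3 : ∀ᶠ t in nhdsWithin 0 (Set.Ioi (0:ℝ)), t ∈ Set.Ioi (0:ℝ) :=
      eventually_mem_nhdsWithin
    obtain ⟨t, ht1, ht2⟩ := (h2.and h3).exists
    exact ⟨t, ht2, ht2.le, ht1⟩
  set c := g t0 / t0 with hc_def
  have hgt0_pos : 0 < g t0 := by
    rcases eq_or_lt_of_le (hg_nonneg t0) with h | h
    · exfalso
      have hv : ψt (g t0) = ψ t0 := hg_val _ ht0_P
      rw [← h, hψt0] at hv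
      have hlt := hsa hP0 ht0_P ht0_pos
      rw [hψ0] at hlt
      linarith
    · exact h
  have hc_pos : 0 < c := div_pos hgt0_pos ht0_pos
  have hgx : ∀ x, P x → g x = c * x := by
    intro x hx
    rcases eq_or_lt_of_le hx.1 with h | hx0
    · rw [← h, hg0]; ring
    rcases le_total x t0 with h | h
    · have hl := hlin x t0 hx ht0_P hx0 h
      rw [hc_def]
      field_simp
      linarith
    · have hl := hlin t0 x ht0_P hx ht0_pos h
      rw [hc_def]
      field_simp
      linarith
  refine ⟨c, hc_pos, ?_⟩
  intro x hx0
  rcases eq_or_lt_of_le (hmem x hx0).1 with hzero | hpos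
  case inr => rw [← hg_val x ⟨hx0, hpos⟩, hgx x ⟨hx0, hpos⟩]
  case inl =>
    set Z := {y : ℝ | 0 ≤ y ∧ ψ y = 0} with hZ_def
    have hxZ : x ∈ Z := ⟨hx0, hzero.symm⟩
    have hZbdd : BddBelow Z := ⟨0, fun y hy => hy.1⟩
    have hZclosed : IsClosed Z := by
      have h1 : IsClosed (Set.Ici (0:ℝ) ∩ ψ ⁻¹' {0}) :=
        hψ.1.preimage_isClosed_of_isClosed isClosed_Ici isClosed_singleton
      have h2 : Z = Set.Ici (0:ℝ) ∩ ψ ⁻¹' {0} := by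
        ext y; simp [hZ_def, Set.mem_setOf_eq]
      rw [h2]; exact h1
    set s := sInf Z with hs_def
    have hsZ : s ∈ Z := hZclosed.csInf_mem ⟨x, hxZ⟩ hZbdd
    have hs0 : 0 ≤ s := hsZ.1
    have hsψ : ψ s = 0 := hsZ.2
    have hs_pos : 0 < s := by
      rcases eq_or_lt_of_le hs0 with h | h
      · exfalso; rw [← h, hψ0] at hsψ; linarith
      · exact h
    have hsx : s ≤ x := csInf_le hZbdd hxZ
    have hPlt : ∀ y, 0 ≤ y → y < s → P y := by
      intro y hy hys
      refine ⟨hy, ?_⟩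
      rcases eq_or_lt_of_le (hmem y hy).1 with h | h
      · exact absurd (csInf_le hZbdd ⟨hy, h.symm⟩) (not_le.mpr hys)
      · exact h
    have hne : (nhdsWithin s (Set.Ico 0 s)).NeBot := by
      rw [← mem_closure_iff_nhdsWithin_neBot, closure_Ico hs_pos.ne]
      exact ⟨hs0, le_refl s⟩
    have hsub : Set.Ico (0:ℝ) s ⊆ Set.Ici 0 := fun y hy => hy.1
    have T1 : Filter.Tendsto ψ (nhdsWithin s (Set.Ico 0 s)) (nhds 0) := by
      have := (hψ.1 s (Set.mem_Ici.mpr hs0)).mono_left (nhdsWithin_mono _ hsub)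
      rwa [hsψ] at this
    have T2 : Filter.Tendsto (fun y => ψt (c*y)) (nhdsWithin s (Set.Ico 0 s))
        (nhds (ψt (c*s))) := by
      have hcont : ContinuousWithinAt (fun y => ψt (c*y)) (Set.Ici 0) s := by
        refine ContinuousWithinAt.comp (hψt.1 (c*s) (Set.mem_Ici.mpr (mul_nonneg hc_pos.le hs0)))
          ((continuous_const.mul continuous_id).continuousWithinAt) ?_
        intro y hy
        exact mul_nonneg hc_pos.le hy
      exact hcont.mono_left (nhdsWithin_mono _ hsub)
    have heq : (fun y => ψt (c*y)) =ᶠ[nhdsWithin s (Set.Ico 0 s)] ψ := by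
      filter_upwards [eventually_mem_nhdsWithin] with y hy
      have hPy := hPlt y hy.1 hy.2
      rw [← hg_val y hPy, hgx y hPy]
    have hcs : ψt (c*s) = 0 := tendsto_nhds_unique (T2.congr' heq) T1
    rw [← hzero]
    refine zero_persists hψt (by positivity) ?_ hcs
    nlinarith

end ArchAux3

theorem same_archimedean_copula_iff_scaling
    (d : ℕ) (hd : 2 ≤ d) (ψ ψt : ℝ → ℝ)
    (hψ : IsArchGenerator ψ) (hψt : IsArchGenerator ψt) :
    (∀ u : Fin d → ℝ, (∀ i, u i ∈ Set.Icc (0:ℝ) 1) →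
        ψ (∑ i, archPseudoInv ψ (u i)) = ψt (∑ i, archPseudoInv ψt (u i))) ↔
      ∃ c > (0:ℝ), ∀ x ≥ (0:ℝ), ψt (c * x) = ψ x := by
  constructor
  · intro H
    apply ArchAux3.forward hψ hψt
    intro a b ha hb
    have h0d : 0 < d := by omega
    have h1d : 1 < d := by omega
    set i0 : Fin d := ⟨0, h0d⟩ with hi0
    set i1 : Fin d := ⟨1, h1d⟩ with hi1
    have hne : i0 ≠ i1 := by
      simp only [hi0, hi1, ne_eq, Fin.mk.injEq]
      norm_num
    set u : Fin d → ℝ := fun i => if i = i0 then a else if i = i1 then b else 1 with hu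
    have humem : ∀ i, u i ∈ Set.Icc (0:ℝ) 1 := by
      intro i
      rw [hu]
      dsimp only
      split_ifs
      · exact ha
      · exact hb
      · exact ⟨by norm_num, le_refl 1⟩
    have hsum : ∀ φ : ℝ → ℝ, archPseudoInv φ 1 = 0 →
        (∑ i, archPseudoInv φ (u i)) = archPseudoInv φ a + archPseudoInv φ b := by
      intro φ h1
      have := Fintype.sum_eq_add i0 i1 hne
        (f := fun i => archPseudoInv φ (u i))
        (by
          intro x hx
          rw [hu]
          simp only [if_neg hx.1, if_neg hx.2]
          exact h1)
      rw [this]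
      simp [hu, hne.symm]
    have := H u humem
    rwa [hsum ψ (ArchAux.pseudoInv_one hψ), hsum ψt (ArchAux.pseudoInv_one hψt)] at this
  · rintro ⟨c, hc, h⟩ u hu
    have hsum : (∑ i, archPseudoInv ψt (u i)) = c * ∑ i, archPseudoInv ψ (u i) := by
      rw [Finset.mul_sum]
      exact Finset.sum_congr rfl (fun i _ => ArchAux2.pseudoInv_scale hc h (u i))
    rw [hsum, h _ (Finset.sum_nonneg fun i _ => ArchAux.pseudoInv_nonneg ψ (u i))]
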